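/- Let H : ℝ → ℝ and ρ₀ : ℝ → ℝ be differentiable. Define the isotropic, rotation-free ansatz v(t,x) = H(t)x, ρ(t,x) = ρ₀(t), φ(t,x) = (2πG/3) ρ₀(t) |x|². Then (v, ρ, φ) satisfies the Newtonian dust system on all of ℝ × ℝ³ if and only if for all t the Friedmann equations with dust hold: Ḣ(t) = −H(t)² − (4πG/3) ρ₀(t) and ρ̇₀(t) = −3 H(t) ρ₀(t). -/

import Mathlib

open MeasureTheory Real
open scoped ENNReal
noncomputable section

/-- ℝ³ with Cartesian coordinates. -/
abbrev V3 := Fin 3 → ℝ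

/-- Partial derivative `∂_i f (x)` of a scalar function on ℝ³. -/
def pd (f : V3 → ℝ) (i : Fin 3) (x : V3) : ℝ := fderiv ℝ f x (Pi.single i 1)

/-- The Newtonian dust (Euler–Poisson) system with gravitational constant `Gc`:
(i) `∂ₜ v^a + v^b ∂_b v^a = −∂_a φ`,
(ii) `∂ₜ ρ + v^a ∂_a ρ = −ρ ∂_a v^a`,
(iii) `Δφ = 4πG ρ`, at every time `t` and point `x`. -/
def NewtonianDust (Gc : ℝ) (v : ℝ → V3 → V3) (ρ φ : ℝ → V3 → ℝ) : Prop :=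
  ∀ t x,
    (∀ a, deriv (fun s => v s x a) t + ∑ b, v t x b * pd (fun y => v t y a) b x
        = - pd (φ t) a x) ∧
    (deriv (fun s => ρ s x) t + ∑ b, v t x b * pd (ρ t) b x
        = - ρ t x * ∑ a, pd (fun y => v t y a) a x) ∧
    (∑ a, pd (pd (φ t) a) a x = 4 * π * Gc * ρ t x)

/-- The isotropic, rotation-free ansatz `v(t,x) = H(t)x`, `ρ(t,x) = ρ₀(t)`,
`φ(t,x) = (2πG/3) ρ₀(t) |x|²` solves the Newtonian dust system iff the
Friedmann equations with dust hold:
`Ḣ = −H² − (4πG/3)ρ₀` and `ρ̇₀ = −3Hρ₀`. -/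
lemma pd_coord_mul (c : ℝ) (a b : Fin 3) (x : V3) :
    pd (fun y : V3 => c * y a) b x = c * (Pi.single b 1 : V3) a := by
  have h : (fun y : V3 => c * y a) = fun y => c * (ContinuousLinearMap.proj a : V3 →L[ℝ] ℝ) y := rfl
  unfold pd
  rw [h, fderiv_const_mul ((ContinuousLinearMap.proj a : V3 →L[ℝ] ℝ).differentiable.differentiableAt)]
  simp [ContinuousLinearMap.fderiv]

lemma hasFDerivAt_sq_sum (k : ℝ) (y : V3) :
    HasFDerivAt (fun y : V3 => k * ∑ a, (y a)^2)
      (∑ a, (k * (2 * y a)) • (ContinuousLinearMap.proj a : V3 →L[ℝ] ℝ)) y := by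
  have h1 : ∀ a : Fin 3, HasFDerivAt (fun y : V3 => k * (y a)^2)
      ((k * (2 * y a)) • (ContinuousLinearMap.proj a : V3 →L[ℝ] ℝ)) y := by
    intro a
    have h := (ContinuousLinearMap.proj a : V3 →L[ℝ] ℝ).hasFDerivAt (x := y)
    have h2 : HasFDerivAt (fun y : V3 => (y a)^2)
        ((2 * y a) • (ContinuousLinearMap.proj a : V3 →L[ℝ] ℝ)) y := by
      rw [two_mul, add_smul]; simp only [pow_two]; exact h.mul h
    have h3 := h2.const_mul k
    simpa [smul_smul, mul_assoc] using h3
  have h4 := HasFDerivAt.fun_sum (fun a (_ : a ∈ (Finset.univ : Finset (Fin 3))) => h1 a)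
  simpa [← Finset.mul_sum] using h4

lemma pd_sq_sum (k : ℝ) (i : Fin 3) (x : V3) :
    pd (fun y : V3 => k * ∑ a, (y a)^2) i x = k * (2 * x i) := by
  unfold pd
  rw [(hasFDerivAt_sq_sum k x).fderiv]
  simp [Pi.single_apply]

theorem friedmann_ansatz_iff (Gc : ℝ) (hGc : 0 < Gc)
    (H ρ₀ : ℝ → ℝ) (hH : Differentiable ℝ H) (hρ₀ : Differentiable ℝ ρ₀) :
    NewtonianDust Gc (fun t x a => H t * x a) (fun t _ => ρ₀ t)
        (fun t x => (2 * π * Gc / 3) * ρ₀ t * ∑ a, (x a) ^ 2) ↔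
      ∀ t, deriv H t = -(H t) ^ 2 - (4 * π * Gc / 3) * ρ₀ t ∧
        deriv ρ₀ t = -3 * H t * ρ₀ t := by
  have key : ∀ t x,
      ((∀ a : Fin 3, deriv (fun s => H s * x a) t
          + ∑ b, (H t * x b) * pd (fun y => H t * y a) b x
          = - pd (fun y => (2 * π * Gc / 3) * ρ₀ t * ∑ a, (y a) ^ 2) a x)
        ↔ ∀ a : Fin 3, deriv H t * x a + H t * x a * H t
            = -((2 * π * Gc / 3) * ρ₀ t * (2 * x a))) := by
    intro t x
    have h1 : ∀ a : Fin 3,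
        pd (fun y => (2 * π * Gc / 3) * ρ₀ t * ∑ a, (y a) ^ 2) a x
          = (2 * π * Gc / 3) * ρ₀ t * (2 * x a) :=
      fun a => pd_sq_sum ((2 * π * Gc / 3) * ρ₀ t) a x
    have h2 : ∀ a : Fin 3, deriv (fun s => H s * x a) t = deriv H t * x a :=
      fun a => deriv_mul_const (hH.differentiableAt) (x a)
    have h3 : ∀ a : Fin 3,
        ∑ b, (H t * x b) * pd (fun y => H t * y a) b x = H t * x a * H t := by
      intro a
      simp only [pd_coord_mul (H t) a]
      simp [Pi.single_apply, mul_ite, Finset.sum_ite_eq]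
    constructor <;> intro h a <;> have := h a <;>
      rw [h1, h2, h3] at * <;> linarith [h1 a, h2 a, h3 a]
  constructor
  · intro hsys t
    obtain ⟨h1, h2, _⟩ := hsys t (Pi.single 0 1)
    have e1 := (key t (Pi.single 0 1)).mp h1 0
    simp only [Pi.single_eq_same] at e1
    have hpd0 : ∀ b : Fin 3, pd (fun _ : V3 => ρ₀ t) b (Pi.single 0 1) = 0 := by
      intro b; unfold pd; simp
    have hdiv : ∑ a : Fin 3, pd (fun y : V3 => H t * y a) a (Pi.single 0 1 : V3) = 3 * H t := by
      simp only [pd_coord_mul]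
      simp [Pi.single_apply, Fin.sum_univ_three]
    rw [hdiv] at h2
    simp only [hpd0, mul_zero, Finset.sum_const_zero, add_zero] at h2
    constructor
    · nlinarith [e1]
    · nlinarith [h2]
  · intro hF t x
    refine ⟨(key t x).mpr ?_, ?_, ?_⟩
    · intro a
      obtain ⟨e1, _⟩ := hF t
      rw [e1]; ring
    · obtain ⟨_, e2⟩ := hF t
      have hpd0 : ∀ b : Fin 3, pd (fun _ : V3 => ρ₀ t) b x = 0 := by
        intro b; unfold pd; simp
      have hdiv : ∑ a : Fin 3, pd (fun y : V3 => H t * y a) a x = 3 * H t := by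
        simp only [pd_coord_mul]
        simp [Pi.single_apply, Fin.sum_univ_three]
      simp only [hpd0, mul_zero, Finset.sum_const_zero, add_zero, hdiv]
      rw [e2]; ring
    · have hinner : ∀ a : Fin 3,
          pd (fun y : V3 => (2 * π * Gc / 3) * ρ₀ t * ∑ a, (y a) ^ 2) a
            = fun y => ((2 * π * Gc / 3) * ρ₀ t * 2) * y a := by
        intro a; funext y
        rw [pd_sq_sum]; ring
      simp only [hinner]
      have : ∀ a : Fin 3,
          pd (fun y : V3 => ((2 * π * Gc / 3) * ρ₀ t * 2) * y a) a x
            = (2 * π * Gc / 3) * ρ₀ t * 2 := by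
        intro a; rw [pd_coord_mul]; simp
      simp only [this, Finset.sum_const, Finset.card_univ, Fintype.card_fin, nsmul_eq_mul]
      push_cast; ring
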